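/- For a = (a_1,...,a_k) ∈ QSeq_n, the trimming operator applied to the fundamental quasisymmetric polynomial satisfies T_j(L_a) = L_{a'} if j = a_1 = n (where a' = (a_2,...,a_k)), and T_j(L_a) = 0 for all other j. -/
import Mathlib


open MvPolynomial
open scoped Classical

/-- The Bergeron–Sottile map `R i` (1-based `i`): set `x_i = 0` and shift later
variables down by one (`X j` is `x_{j+1}`). -/
noncomputable def R (i : ℕ) : MvPolynomial ℕ ℤ →ₐ[ℤ] MvPolynomial ℕ ℤ :=
  aeval (fun j => if j + 1 < i then X j else if j + 1 = i then 0 else X (j - 1))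

/-- The trimming operator `T i = (R (i+1) f - R i f) / x_i`. -/
noncomputable def T (i : ℕ) (f : MvPolynomial ℕ ℤ) : MvPolynomial ℕ ℤ :=
  (R (i + 1) f - R i f).divMonomial (Finsupp.single (i - 1) 1)

/-- Compatible sequences for `a = (a_1,…,a_k)`: weakly decreasing sequences
`(i_1,…,i_k)` with `1 ≤ i_j ≤ a_j`, strictly decreasing where `a` strictly
decreases. -/
noncomputable def compatSet (k : ℕ) (a : Fin k → ℕ) : Finset (Fin k → ℕ) :=
  (Fintype.piFinset fun j => Finset.Icc 1 (a j)).filter fun i =>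
    ∀ (j : ℕ) (h : j + 1 < k),
      i ⟨j + 1, h⟩ ≤ i ⟨j, Nat.lt_of_succ_lt h⟩ ∧
        (a ⟨j + 1, h⟩ < a ⟨j, Nat.lt_of_succ_lt h⟩ →
          i ⟨j + 1, h⟩ < i ⟨j, Nat.lt_of_succ_lt h⟩)

/-- The slide polynomial `L_a = Σ_{i compatible with a} x_{i_1} ⋯ x_{i_k}`. -/
noncomputable def slide (k : ℕ) (a : Fin k → ℕ) : MvPolynomial ℕ ℤ :=
  ∑ i ∈ compatSet k a, ∏ j, X (i j - 1)

/-- `a ∈ QSeq_n`: positive entries, `a_1 = n`, consecutive differences in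
`{0, 1}`. -/
def IsQSeq (n k : ℕ) (a : Fin k → ℕ) : Prop :=
  (∀ j, 1 ≤ a j) ∧ (∀ h : 0 < k, a ⟨0, h⟩ = n) ∧
    ∀ (j : ℕ) (h : j + 1 < k),
      a ⟨j + 1, h⟩ ≤ a ⟨j, Nat.lt_of_succ_lt h⟩ ∧
        a ⟨j, Nat.lt_of_succ_lt h⟩ ≤ a ⟨j + 1, h⟩ + 1

lemma compat_iff {k : ℕ} {a i : Fin k → ℕ} :
    i ∈ compatSet k a ↔
      (∀ j, 1 ≤ i j ∧ i j ≤ a j) ∧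
        ∀ (j : ℕ) (h : j + 1 < k),
          i ⟨j + 1, h⟩ ≤ i ⟨j, Nat.lt_of_succ_lt h⟩ ∧
            (a ⟨j + 1, h⟩ < a ⟨j, Nat.lt_of_succ_lt h⟩ →
              i ⟨j + 1, h⟩ < i ⟨j, Nat.lt_of_succ_lt h⟩) := by
  simp [compatSet, Fintype.mem_piFinset, Finset.mem_Icc]
lemma R_apply_X (p m : ℕ) :
    R p (X m) = if m + 1 < p then X m else if m + 1 = p then 0 else X (m - 1) := by
  simp [_root_.R]
lemma R_mon (p : ℕ) {K : ℕ} (i : Fin K → ℕ) (hi : ∀ j, 1 ≤ i j) :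
    R p (∏ j, X (i j - 1)) =
      if ∃ m, i m = p then 0
      else ∏ j, X ((if i j < p then i j else i j - 1) - 1) := by
  rw [map_prod]
  by_cases h : ∃ m, i m = p
  · rcases h with ⟨m, hm⟩
    rw [if_pos ⟨m, hm⟩]
    apply Finset.prod_eq_zero (Finset.mem_univ m)
    rw [R_apply_X]
    have h1 := hi m
    rw [if_neg (by omega), if_pos (by omega)]
  · rw [if_neg h]
    apply Finset.prod_congr rfl
    intro j _
    rw [R_apply_X]
    have h1 : i j ≠ p := fun hj => h ⟨j, hj⟩
    have h2 := hi j
    by_cases h4 : i j < p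
    · rw [if_pos (by omega), if_pos h4]
    · rw [if_neg (by omega), if_neg (by omega), if_neg h4]
lemma a_le_n {n K : ℕ} {a : Fin K → ℕ} (ha : IsQSeq n K a) :
    ∀ (t : ℕ) (h : t < K), a ⟨t, h⟩ ≤ n := by
  intro t
  induction t with
  | zero => intro h; rw [ha.2.1 h]
  | succ t ih =>
    intro h
    have h1 := (ha.2.2 t h).1
    have h2 := ih (Nat.lt_of_succ_lt h)
    omega
lemma prefix_step {n K : ℕ} {a i : Fin K → ℕ} (ha : IsQSeq n K a)
    (hi : i ∈ compatSet K a) (t : ℕ) (h : t + 1 < K)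
    (he : i ⟨t + 1, h⟩ = a ⟨t + 1, h⟩) :
    i ⟨t, Nat.lt_of_succ_lt h⟩ = a ⟨t, Nat.lt_of_succ_lt h⟩ := by
  obtain ⟨hb, hc⟩ := compat_iff.mp hi
  have hb1 := (hb ⟨t, Nat.lt_of_succ_lt h⟩).2
  obtain ⟨hc1, hc2⟩ := hc t h
  obtain ⟨hq1, hq2⟩ := ha.2.2 t h
  rcases Nat.lt_or_ge (a ⟨t + 1, h⟩) (a ⟨t, Nat.lt_of_succ_lt h⟩) with hlt | hge
  · have := hc2 hlt
    omega
  · omega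
lemma prefix_aux {n K : ℕ} {a i : Fin K → ℕ} (ha : IsQSeq n K a)
    (hi : i ∈ compatSet K a) :
    ∀ (d t : ℕ) (h : t + d < K),
      i ⟨t + d, h⟩ = a ⟨t + d, h⟩ →
        i ⟨t, by omega⟩ = a ⟨t, by omega⟩ := by
  intro d
  induction d with
  | zero => intro t h he; exact he
  | succ d ih =>
    intro t h he
    have h' : (t + 1) + d < K := by omega
    have e : (⟨t + 1 + d, h'⟩ : Fin K) = ⟨t + (d + 1), h⟩ := Fin.ext (by simp; omega)
    have := ih (t + 1) h' (by rw [e]; exact he)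
    exact prefix_step ha hi t (by omega) this
lemma prefix_eq {n K : ℕ} {a i : Fin K → ℕ} (ha : IsQSeq n K a)
    (hi : i ∈ compatSet K a) (m : Fin K) (hm : i m = a m) (t : ℕ) (ht : t ≤ m.1) :
    i ⟨t, Nat.lt_of_le_of_lt ht m.2⟩ = a ⟨t, Nat.lt_of_le_of_lt ht m.2⟩ := by
  have h : t + (m.1 - t) < K := by omega
  have e : (⟨t + (m.1 - t), h⟩ : Fin K) = m := Fin.ext (by simp; omega)
  exact prefix_aux ha hi (m.1 - t) t h (by rw [e]; exact hm)
lemma ivt {n K : ℕ} {a : Fin K → ℕ} (ha : IsQSeq n K a) :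
    ∀ (m : ℕ) (h : m < K) (c : ℕ), a ⟨m, h⟩ ≤ c → c ≤ n →
      ∃ (t : ℕ) (ht : t ≤ m), a ⟨t, Nat.lt_of_le_of_lt ht h⟩ = c := by
  intro m
  induction m with
  | zero =>
    intro h c h1 h2
    refine ⟨0, le_refl 0, ?_⟩
    rw [ha.2.1 h] at h1 ⊢
    omega
  | succ m ih =>
    intro h c h1 h2
    by_cases hm : a ⟨m, Nat.lt_of_succ_lt h⟩ ≤ c
    · obtain ⟨t, ht, he⟩ := ih (Nat.lt_of_succ_lt h) c hm h2
      exact ⟨t, by omega, he⟩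
    · obtain ⟨hq1, hq2⟩ := ha.2.2 m h
      exact ⟨m + 1, le_refl _, by omega⟩
lemma lower_mem {K p : ℕ} (hp : 1 ≤ p) {a i : Fin K → ℕ} (hi : i ∈ compatSet K a)
    (hnp : ¬ ∃ m, i m = p) :
    (fun m => if i m = p + 1 then p else i m) ∈ compatSet K a := by
  obtain ⟨hb, hc⟩ := compat_iff.mp hi
  rw [compat_iff]
  constructor
  · intro j
    obtain ⟨h1, h2⟩ := hb j
    split_ifs with h <;> omega
  · intro j h
    obtain ⟨h1, h2⟩ := hc j h
    have hx : i ⟨j, Nat.lt_of_succ_lt h⟩ ≠ p := fun he => hnp ⟨_, he⟩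
    have hy : i ⟨j + 1, h⟩ ≠ p := fun he => hnp ⟨_, he⟩
    constructor
    · split_ifs <;> omega
    · intro hlt
      have h2' := h2 hlt
      split_ifs <;> omega
lemma raise_mem {K p : ℕ} {a i : Fin K → ℕ} (hi : i ∈ compatSet K a)
    (hnp1 : ¬ ∃ m, i m = p + 1) (hq : ∀ m, i m = p → p + 1 ≤ a m) :
    (fun m => if i m = p then p + 1 else i m) ∈ compatSet K a := by
  obtain ⟨hb, hc⟩ := compat_iff.mp hi
  rw [compat_iff]
  constructor
  · intro j
    obtain ⟨h1, h2⟩ := hb j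
    by_cases h : i j = p
    · rw [if_pos h]; exact ⟨by omega, hq j h⟩
    · rw [if_neg h]; exact ⟨h1, h2⟩
  · intro j h
    obtain ⟨h1, h2⟩ := hc j h
    have hx : i ⟨j, Nat.lt_of_succ_lt h⟩ ≠ p + 1 := fun he => hnp1 ⟨_, he⟩
    have hy : i ⟨j + 1, h⟩ ≠ p + 1 := fun he => hnp1 ⟨_, he⟩
    constructor
    · split_ifs <;> omega
    · intro hlt
      have h2' := h2 hlt
      split_ifs <;> omega
lemma R_slide {k : ℕ} (q : ℕ) (a : Fin (k + 1) → ℕ) :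
    R q (slide (k + 1) a) =
      ∑ i ∈ (compatSet (k + 1) a).filter (fun i => ¬ ∃ m, i m = q),
        ∏ j, X ((if i j < q then i j else i j - 1) - 1) := by
  rw [slide, map_sum, Finset.sum_filter]
  refine Finset.sum_congr rfl fun i hi => ?_
  rw [R_mon q i (fun j => ((compat_iff.mp hi).1 j).1)]
  by_cases h : ∃ m, i m = q
  · rw [if_pos h, if_neg (by tauto)]
  · rw [if_neg h, if_pos h]
lemma diff_eq {k : ℕ} (p : ℕ) (hp : 1 ≤ p) (a : Fin (k + 1) → ℕ) :
    R (p + 1) (slide (k + 1) a) - R p (slide (k + 1) a) =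
      ∑ i ∈ (compatSet (k + 1) a).filter
          (fun i => (¬ ∃ m, i m = p + 1) ∧ ∃ m, i m = p ∧ a m ≤ p),
        ∏ j, X ((if i j < p + 1 then i j else i j - 1) - 1) := by
  rw [R_slide (p + 1) a, R_slide p a]
  have split1 := Finset.sum_filter_add_sum_filter_not
    ((compatSet (k + 1) a).filter (fun i => ¬ ∃ m, i m = p + 1))
    (fun i => ∃ m, i m = p)
    (fun i => ∏ j, (X ((if i j < p + 1 then i j else i j - 1) - 1) : MvPolynomial ℕ ℤ))
  have split0 := Finset.sum_filter_add_sum_filter_not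
    ((compatSet (k + 1) a).filter (fun i => ¬ ∃ m, i m = p))
    (fun i => ∃ m, i m = p + 1)
    (fun i => ∏ j, (X ((if i j < p then i j else i j - 1) - 1) : MvPolynomial ℕ ℤ))
  have hC : ∑ i ∈ ((compatSet (k + 1) a).filter (fun i => ¬ ∃ m, i m = p + 1)).filter
        (fun i => ¬ ∃ m, i m = p),
        ∏ j, (X ((if i j < p + 1 then i j else i j - 1) - 1) : MvPolynomial ℕ ℤ)
      = ∑ i ∈ ((compatSet (k + 1) a).filter (fun i => ¬ ∃ m, i m = p)).filter
        (fun i => ¬ ∃ m, i m = p + 1),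
        ∏ j, X ((if i j < p then i j else i j - 1) - 1) := by
    have hset : ((compatSet (k + 1) a).filter (fun i => ¬ ∃ m, i m = p + 1)).filter
          (fun i => ¬ ∃ m, i m = p)
        = ((compatSet (k + 1) a).filter (fun i => ¬ ∃ m, i m = p)).filter
          (fun i => ¬ ∃ m, i m = p + 1) := by
      rw [Finset.filter_filter, Finset.filter_filter]
      exact Finset.filter_congr fun i _ => by tauto
    rw [hset]
    refine Finset.sum_congr rfl fun i hi => ?_
    simp only [Finset.mem_filter] at hi
    obtain ⟨⟨_, hne0⟩, hne1⟩ := hi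
    refine Finset.prod_congr rfl fun j _ => ?_
    have h0 : i j ≠ p := fun h => hne0 ⟨j, h⟩
    have h1 : i j ≠ p + 1 := fun h => hne1 ⟨j, h⟩
    congr 1
    split_ifs <;> omega
  have hB : ∑ i ∈ ((compatSet (k + 1) a).filter (fun i => ¬ ∃ m, i m = p)).filter
        (fun i => ∃ m, i m = p + 1),
        ∏ j, (X ((if i j < p then i j else i j - 1) - 1) : MvPolynomial ℕ ℤ)
      = ∑ i ∈ (compatSet (k + 1) a).filter
        (fun i => (¬ ∃ m, i m = p + 1) ∧ (∃ m, i m = p) ∧ ∀ m, i m = p → p + 1 ≤ a m),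
        ∏ j, X ((if i j < p + 1 then i j else i j - 1) - 1) := by
    apply Finset.sum_nbij' (fun i => fun m => if i m = p + 1 then p else i m)
      (fun i => fun m => if i m = p then p + 1 else i m)
    · intro i hi
      simp only [Finset.mem_filter] at hi ⊢
      obtain ⟨⟨hiS, hne0⟩, hE1⟩ := hi
      refine ⟨lower_mem hp hiS hne0, ?_, ?_, ?_⟩
      · rintro ⟨m, hm⟩
        by_cases h : i m = p + 1
        · rw [if_pos h] at hm; omega
        · rw [if_neg h] at hm; exact h hm
      · obtain ⟨m, hm⟩ := hE1
        exact ⟨m, by rw [if_pos hm]⟩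
      · intro m hm
        by_cases h : i m = p + 1
        · have := ((compat_iff.mp hiS).1 m).2
          omega
        · rw [if_neg h] at hm
          exact absurd ⟨m, hm⟩ hne0
    · intro i hi
      simp only [Finset.mem_filter] at hi ⊢
      obtain ⟨hiS, hne1, hE0, hQ⟩ := hi
      refine ⟨⟨raise_mem hiS hne1 hQ, ?_⟩, ?_⟩
      · rintro ⟨m, hm⟩
        by_cases h : i m = p
        · rw [if_pos h] at hm; omega
        · rw [if_neg h] at hm; exact h hm
      · obtain ⟨m, hm⟩ := hE0
        exact ⟨m, by rw [if_pos hm]⟩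
    · intro i hi
      simp only [Finset.mem_filter] at hi
      obtain ⟨⟨hiS, hne0⟩, hE1⟩ := hi
      funext m
      have h0 : i m ≠ p := fun h => hne0 ⟨m, h⟩
      simp only
      split_ifs <;> omega
    · intro i hi
      simp only [Finset.mem_filter] at hi
      obtain ⟨hiS, hne1, hE0, hQ⟩ := hi
      funext m
      have h1 : i m ≠ p + 1 := fun h => hne1 ⟨m, h⟩
      simp only
      split_ifs <;> omega
    · intro i hi
      simp only [Finset.mem_filter] at hi
      obtain ⟨⟨hiS, hne0⟩, hE1⟩ := hi
      refine Finset.prod_congr rfl fun j _ => ?_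
      have h0 : i j ≠ p := fun h => hne0 ⟨j, h⟩
      have hl : (fun m => if i m = p + 1 then p else i m) j
          = if i j = p + 1 then p else i j := rfl
      rw [hl]
      congr 1
      split_ifs <;> omega
  have split2 := Finset.sum_filter_add_sum_filter_not
    (((compatSet (k + 1) a).filter (fun i => ¬ ∃ m, i m = p + 1)).filter
      (fun i => ∃ m, i m = p))
    (fun i => ∀ m, i m = p → p + 1 ≤ a m)
    (fun i => ∏ j, (X ((if i j < p + 1 then i j else i j - 1) - 1) : MvPolynomial ℕ ℤ))
  have hQset : (((compatSet (k + 1) a).filter (fun i => ¬ ∃ m, i m = p + 1)).filter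
        (fun i => ∃ m, i m = p)).filter (fun i => ∀ m, i m = p → p + 1 ≤ a m)
      = (compatSet (k + 1) a).filter
        (fun i => (¬ ∃ m, i m = p + 1) ∧ (∃ m, i m = p) ∧ ∀ m, i m = p → p + 1 ≤ a m) := by
    rw [Finset.filter_filter, Finset.filter_filter]
  have hRest : (((compatSet (k + 1) a).filter (fun i => ¬ ∃ m, i m = p + 1)).filter
        (fun i => ∃ m, i m = p)).filter (fun i => ¬ ∀ m, i m = p → p + 1 ≤ a m)
      = (compatSet (k + 1) a).filter
        (fun i => (¬ ∃ m, i m = p + 1) ∧ ∃ m, i m = p ∧ a m ≤ p) := by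
    rw [Finset.filter_filter, Finset.filter_filter]
    refine Finset.filter_congr fun i _ => ?_
    simp only [not_forall, exists_prop, not_le, Nat.lt_succ_iff]
    tauto
  rw [← split1, ← split0, hC, hB, ← split2, hQset, hRest]
  ring
lemma sum_divMonomial {α : Type*} (s : Finset α) (f : α → MvPolynomial ℕ ℤ) (u : ℕ →₀ ℕ) :
    (∑ x ∈ s, f x).divMonomial u = ∑ x ∈ s, (f x).divMonomial u := by
  induction s using Finset.cons_induction with
  | empty => simp [MvPolynomial.zero_divMonomial]
  | cons x s hx ih => rw [Finset.sum_cons, Finset.sum_cons, MvPolynomial.add_divMonomial, ih]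
lemma T_ne {n k : ℕ} {a : Fin (k + 1) → ℕ} (ha : IsQSeq n (k + 1) a)
    (p : ℕ) (hp : 1 ≤ p) (hpn : p ≠ n) : T p (slide (k + 1) a) = 0 := by
  unfold T
  rw [diff_eq p hp a]
  have hempty : (compatSet (k + 1) a).filter
      (fun i => (¬ ∃ m, i m = p + 1) ∧ ∃ m, i m = p ∧ a m ≤ p) = ∅ := by
    rw [Finset.filter_eq_empty_iff]
    rintro i hi ⟨hne1, m, hm, ham⟩
    have hbm := ((compat_iff.mp hi).1 m).2
    have ham' : a m = p := by omega
    have hle : a m ≤ n := a_le_n ha m.1 m.2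
    have hpn' : p < n := by omega
    have him : i m = a m := by omega
    obtain ⟨t, ht, hat⟩ := ivt ha m.1 m.2 (p + 1) (show a m ≤ p + 1 by omega) (by omega)
    have hit := prefix_eq ha hi m him t ht
    exact hne1 ⟨⟨t, Nat.lt_of_le_of_lt ht m.2⟩, by rw [hit]; exact hat⟩
  rw [hempty, Finset.sum_empty, MvPolynomial.zero_divMonomial]
noncomputable def consF (n k : ℕ) (i' : Fin k → ℕ) : Fin (k + 1) → ℕ :=
  fun m => if h : m.1 = 0 then n else i' ⟨m.1 - 1, by omega⟩
lemma T_eq {n k : ℕ} (hn : 1 ≤ n) {a : Fin (k + 1) → ℕ} (ha : IsQSeq n (k + 1) a) :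
    T n (slide (k + 1) a) = slide k (fun j => a j.succ) := by
  unfold T
  rw [diff_eq n hn a]
  have hfilter : (compatSet (k + 1) a).filter
      (fun i => (¬ ∃ m, i m = n + 1) ∧ ∃ m, i m = n ∧ a m ≤ n)
      = (compatSet (k + 1) a).filter (fun i => i ⟨0, Nat.succ_pos k⟩ = n) := by
    refine Finset.filter_congr fun i hi => ?_
    obtain ⟨hb, hc⟩ := compat_iff.mp hi
    constructor
    · rintro ⟨hne1, m, hm, ham⟩
      have hbm := (hb m).2
      have him : i m = a m := by omega
      have h0 := prefix_eq ha hi m him 0 (Nat.zero_le _)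
      have ha0 : a ⟨0, Nat.succ_pos k⟩ = n := ha.2.1 _
      exact h0.trans ha0
    · intro h0
      have ha0 : a ⟨0, Nat.succ_pos k⟩ = n := ha.2.1 _
      refine ⟨?_, ⟨0, Nat.succ_pos k⟩, h0, le_of_eq ha0⟩
      rintro ⟨m, hm⟩
      have h1 := (hb m).2
      have h2 : a m ≤ n := a_le_n ha m.1 m.2
      omega
  rw [hfilter]
  have hsum : ∑ i ∈ (compatSet (k + 1) a).filter (fun i => i ⟨0, Nat.succ_pos k⟩ = n),
        ∏ j, (X ((if i j < n + 1 then i j else i j - 1) - 1) : MvPolynomial ℕ ℤ)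
      = ∑ i ∈ (compatSet (k + 1) a).filter (fun i => i ⟨0, Nat.succ_pos k⟩ = n),
        ∏ j, (X (i j - 1) : MvPolynomial ℕ ℤ) := by
    refine Finset.sum_congr rfl fun i hi => ?_
    simp only [Finset.mem_filter] at hi
    refine Finset.prod_congr rfl fun j _ => ?_
    have h1 := ((compat_iff.mp hi.1).1 j).2
    have h2 : a j ≤ n := a_le_n ha j.1 j.2
    rw [if_pos (by omega)]
  rw [hsum, sum_divMonomial]
  have hterm : ∀ i ∈ (compatSet (k + 1) a).filter (fun i => i ⟨0, Nat.succ_pos k⟩ = n),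
      (∏ j, (X (i j - 1) : MvPolynomial ℕ ℤ)).divMonomial (Finsupp.single (n - 1) 1)
        = ∏ j : Fin k, (X (i j.succ - 1) : MvPolynomial ℕ ℤ) := by
    intro i hi
    simp only [Finset.mem_filter] at hi
    have hi0 : i 0 = n := by
      rw [show (0 : Fin (k + 1)) = ⟨0, Nat.succ_pos k⟩ from Fin.ext (by simp)]
      exact hi.2
    rw [Fin.prod_univ_succ, hi0, MvPolynomial.X_mul_divMonomial]
  rw [Finset.sum_congr rfl hterm, slide]
  have ha0 : a ⟨0, Nat.succ_pos k⟩ = n := ha.2.1 _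
  apply Finset.sum_nbij' (fun i => fun j : Fin k => i j.succ) (consF n k)
  · intro i hi
    simp only [Finset.mem_filter] at hi
    obtain ⟨hiS, hi0⟩ := hi
    obtain ⟨hb, hc⟩ := compat_iff.mp hiS
    rw [compat_iff]
    constructor
    · intro j
      exact hb j.succ
    · intro j h
      simp only [Fin.succ_mk]
      exact hc (j + 1) (by omega)
  · intro i' hi'
    obtain ⟨hb', hc'⟩ := compat_iff.mp hi'
    simp only [Finset.mem_filter]
    refine ⟨?_, rfl⟩
    rw [compat_iff]
    constructor
    · intro m
      obtain ⟨mv, hmv⟩ := m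
      cases mv with
      | zero => exact ⟨hn, le_of_eq (ha.2.1 hmv).symm⟩
      | succ t => exact hb' ⟨t, by omega⟩
    · intro j h
      cases j with
      | zero =>
        have hk : 0 < k := by omega
        have h1 : i' ⟨0, hk⟩ ≤ a ⟨0 + 1, h⟩ := (hb' ⟨0, hk⟩).2
        have h2 : a ⟨0 + 1, h⟩ ≤ a ⟨0, Nat.lt_of_succ_lt h⟩ := (ha.2.2 0 h).1
        have ha0' : a ⟨0, Nat.lt_of_succ_lt h⟩ = n := ha.2.1 _
        show i' ⟨0, hk⟩ ≤ n ∧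
          (a ⟨0 + 1, h⟩ < a ⟨0, Nat.lt_of_succ_lt h⟩ → i' ⟨0, hk⟩ < n)
        constructor
        · omega
        · intro hlt; omega
      | succ t =>
        have h' : t + 1 < k := by omega
        exact hc' t h'
  · intro i hi
    simp only [Finset.mem_filter] at hi
    funext m
    obtain ⟨mv, hmv⟩ := m
    cases mv with
    | zero => exact hi.2.symm
    | succ t => rfl
  · intro i' _
    funext j
    rfl
  · intro i hi
    rfl

/-- For `a = (a_1,…,a_{k+1}) ∈ QSeq_n`:
`T_n L_a = L_{a'}` where `a' = (a_2,…,a_{k+1})`, and `T_j L_a = 0` for every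
other `j ≥ 1`. -/
theorem trim_fundamental (n k : ℕ) (hn : 1 ≤ n) (a : Fin (k + 1) → ℕ)
    (ha : IsQSeq n (k + 1) a) :
    T n (slide (k + 1) a) = slide k (fun j => a j.succ) ∧
      ∀ j, 1 ≤ j → j ≠ n → T j (slide (k + 1) a) = 0 := by
  exact ⟨T_eq hn ha, fun j hj hjn => T_ne ha j hj hjn⟩
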